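/- Let f : I ⊆ ℝ \ {0} → ℝ be harmonically convex and a, b ∈ I with a < b, with f integrable on [a,b]. Then f(2ab/(a+b)) ≤ (ab/(b−a)) · ∫_a^b f(x)/x² dx ≤ (f(a)+f(b))/2. -/

import Mathlib

open Real Set intervalIntegral MeasureTheory

lemma aux_inv_le {x y : ℝ} (h : 0 < x * y) (hxy : x ≤ y) : y⁻¹ ≤ x⁻¹ := by
  have hx : x ≠ 0 := fun hx => by simp [hx] at h
  have hy : y ≠ 0 := fun hy => by simp [hy] at h
  have key : x⁻¹ - y⁻¹ = (y - x) / (x * y) := by field_simp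
  have := div_nonneg (sub_nonneg.2 hxy) h.le
  linarith [key ▸ this]

lemma aux_inv_lt {x y : ℝ} (h : 0 < x * y) (hxy : x < y) : y⁻¹ < x⁻¹ := by
  have hx : x ≠ 0 := fun hx => by simp [hx] at h
  have hy : y ≠ 0 := fun hy => by simp [hy] at h
  have key : x⁻¹ - y⁻¹ = (y - x) / (x * y) := by field_simp
  have := div_pos (sub_pos.2 hxy) h
  linarith [key ▸ this]

-- Hermite-Hadamard for convex g on [α,β]
lemma hh_aux {g : ℝ → ℝ} {α β : ℝ} (hαβ : α < β)
    (hcvx : ∀ u ∈ Set.Icc α β, ∀ v ∈ Set.Icc α β, ∀ t ∈ Set.Icc (0:ℝ) 1,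
      g (t * u + (1 - t) * v) ≤ t * g u + (1 - t) * g v)
    (hgi : IntervalIntegrable g MeasureTheory.volume α β) :
    (β - α) * g ((α + β) / 2) ≤ (∫ u in α..β, g u) ∧
    (∫ u in α..β, g u) ≤ (β - α) * ((g α + g β) / 2) := by
  have hpos : 0 < β - α := sub_pos.2 hαβ
  have hαm : α ∈ Set.Icc α β := ⟨le_refl _, hαβ.le⟩
  have hβm : β ∈ Set.Icc α β := ⟨hαβ.le, le_refl _⟩
  constructor
  · -- left
    have hrefl : IntervalIntegrable (fun u => g (α + β - u)) MeasureTheory.volume α β := by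
      have := hgi.comp_sub_left (α + β)
      simpa using this.symm
    have hmono : ∀ u ∈ Set.Icc α β,
        (fun _ : ℝ => g ((α + β) / 2)) u ≤ (fun u => (g u + g (α + β - u)) / 2) u := by
      intro u hu
      have hv : α + β - u ∈ Set.Icc α β := ⟨by linarith [hu.2], by linarith [hu.1]⟩
      have := hcvx u hu (α + β - u) hv (1/2) (by norm_num)
      simp only
      calc g ((α + β) / 2) = g ((1/2) * u + (1 - 1/2) * (α + β - u)) := by ring_nf
        _ ≤ (1/2) * g u + (1 - 1/2) * g (α + β - u) := this
        _ = (g u + g (α + β - u)) / 2 := by ring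
    have hmi := intervalIntegral.integral_mono_on hαβ.le
      (intervalIntegrable_const) (((hgi.add hrefl).div_const 2)) hmono
    have h1 : (∫ _ in α..β, g ((α + β) / 2)) = (β - α) * g ((α + β) / 2) := by
      simp [smul_eq_mul]
    have h2 : (∫ u in α..β, (g u + g (α + β - u)) / 2) = ∫ u in α..β, g u := by
      rw [intervalIntegral.integral_div, intervalIntegral.integral_add hgi hrefl]
      have h3 : (∫ u in α..β, g (α + β - u)) = ∫ u in α..β, g u := by
        rw [intervalIntegral.integral_comp_sub_left g (α + β)]
        norm_num
      rw [h3]; ring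
    rw [h1, h2] at hmi
    exact hmi
  · -- right
    set m := (g β - g α) / (β - α) with hm
    have hLc : Continuous fun u : ℝ => g α + m * (u - α) := by continuity
    have hmono : ∀ u ∈ Set.Icc α β, g u ≤ (fun u => g α + m * (u - α)) u := by
      intro u hu
      set t := (u - α) / (β - α) with ht
      have ht0 : 0 ≤ t := div_nonneg (by linarith [hu.1]) hpos.le
      have ht1 : t ≤ 1 := by
        rw [ht, div_le_one hpos]; linarith [hu.2]
      have hu' : u = t * β + (1 - t) * α := by
        have h := div_mul_cancel₀ (u - α) hpos.ne'
        rw [← ht] at h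
        linear_combination -h
      have := hcvx β hβm α hαm t ⟨ht0, ht1⟩
      rw [← hu'] at this
      calc g u ≤ t * g β + (1 - t) * g α := this
        _ = g α + m * (u - α) := by
            rw [hm, ht]; field_simp; ring
    have hmi := intervalIntegral.integral_mono_on hαβ.le hgi
      (hLc.intervalIntegrable α β) hmono
    have hL : (∫ u in α..β, (g α + m * (u - α))) = (β - α) * ((g α + g β) / 2) := by
      rw [intervalIntegral.integral_add (intervalIntegrable_const)
        ((by fun_prop : Continuous (fun u : ℝ => m * (u - α))).intervalIntegrable α β)]
      rw [intervalIntegral.integral_const_mul]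
      rw [intervalIntegral.integral_sub (intervalIntegrable_id) (intervalIntegrable_const)]
      rw [integral_id, intervalIntegral.integral_const, intervalIntegral.integral_const]
      simp only [smul_eq_mul, hm]
      field_simp
      ring
    rw [hL] at hmi
    exact hmi


def HarmonicallyConvexOn (I : Set ℝ) (f : ℝ → ℝ) : Prop :=
  ∀ x ∈ I, ∀ y ∈ I, ∀ t ∈ Set.Icc (0:ℝ) 1,
    f (x * y / (t * x + (1 - t) * y)) ≤ t * f y + (1 - t) * f x

theorem stmt5 (I : Set ℝ) (hI : I.OrdConnected) (hI0 : (0:ℝ) ∉ I)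
    (f : ℝ → ℝ) (hharm : HarmonicallyConvexOn I f)
    (a b : ℝ) (ha : a ∈ I) (hb : b ∈ I) (hab : a < b)
    (hint : IntervalIntegrable f MeasureTheory.volume a b) :
    f (2 * a * b / (a + b)) ≤ (a * b / (b - a)) * ∫ x in a..b, f x / x ^ 2 ∧
    (a * b / (b - a)) * ∫ x in a..b, f x / x ^ 2 ≤ (f a + f b) / 2 := by
  have hIcc : Set.Icc a b ⊆ I := hI.out ha hb
  have h0 : (0:ℝ) ∉ Set.Icc a b := fun h => hI0 (hIcc h)
  have hab0 : 0 < a * b := by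
    rcases lt_trichotomy a 0 with hA | hA | hA
    · rcases lt_trichotomy b 0 with hB | hB | hB
      · exact mul_pos_of_neg_of_neg hA hB
      · exact absurd (⟨by linarith, by linarith⟩ : (0:ℝ) ∈ Set.Icc a b) h0
      · exact absurd (⟨by linarith, by linarith⟩ : (0:ℝ) ∈ Set.Icc a b) h0
    · exact absurd (⟨by linarith, by linarith⟩ : (0:ℝ) ∈ Set.Icc a b) h0
    · exact mul_pos hA (hA.trans hab)
  have ha0 : a ≠ 0 := fun h => by simp [h] at hab0
  have hb0 : b ≠ 0 := fun h => by simp [h] at hab0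
  set α := b⁻¹ with hαdef
  set β := a⁻¹ with hβdef
  have hαβ : α < β := aux_inv_lt hab0 hab
  have hαβ0 : 0 < α * β := by
    have : α * β = (a * b)⁻¹ := by rw [hαdef, hβdef, ← mul_inv, mul_comm]
    rw [this]; exact inv_pos.2 hab0
  have hne : ∀ u ∈ Set.Icc α β, u ≠ 0 := by
    rintro u hu rfl
    nlinarith [hu.1, hu.2]
  -- sign product facts
  have hsign : ∀ u ∈ Set.Icc α β, ∀ v ∈ Set.Icc α β, 0 < u * v := by
    intro u hu v hv
    rcases lt_trichotomy α 0 with hA | hA | hA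
    · have hβ0 : β < 0 := by nlinarith
      exact mul_pos_of_neg_of_neg (lt_of_le_of_lt hu.2 hβ0) (lt_of_le_of_lt hv.2 hβ0)
    · exact absurd (hαdef.symm.trans hA) (inv_ne_zero hb0)
    · exact mul_pos (lt_of_lt_of_le hA hu.1) (lt_of_lt_of_le hA hv.1)
  -- inverses of Icc α β lie in Icc a b
  have hmem : ∀ u ∈ Set.Icc α β, u⁻¹ ∈ Set.Icc a b := by
    intro u hu
    have h1 : u⁻¹ ≤ α⁻¹ := aux_inv_le (hsign α ⟨le_refl _, hαβ.le⟩ u hu) hu.1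
    have h2 : β⁻¹ ≤ u⁻¹ := aux_inv_le (hsign u hu β ⟨hαβ.le, le_refl _⟩) hu.2
    rw [hαdef, inv_inv] at h1
    rw [hβdef, inv_inv] at h2
    exact ⟨h2, h1⟩
  -- convexity of g = f ∘ inv on Icc α β
  have hcvx : ∀ u ∈ Set.Icc α β, ∀ v ∈ Set.Icc α β, ∀ t ∈ Set.Icc (0:ℝ) 1,
      f ((t * u + (1 - t) * v)⁻¹) ≤ t * f u⁻¹ + (1 - t) * f v⁻¹ := by
    intro u hu v hv t ht
    have hw : t * u + (1 - t) * v ∈ Set.Icc α β := by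
      constructor
      · nlinarith [hu.1, hv.1, ht.1, ht.2]
      · nlinarith [hu.2, hv.2, ht.1, ht.2]
    have hu0 := hne u hu
    have hv0 := hne v hv
    have hw0 := hne _ hw
    have key := hharm v⁻¹ (hIcc (hmem v hv)) u⁻¹ (hIcc (hmem u hu)) t ht
    have hden : t * v⁻¹ + (1 - t) * u⁻¹ = (t * u + (1 - t) * v) / (u * v) := by
      rw [eq_div_iff (mul_ne_zero hu0 hv0)]
      field_simp
    have h1 : v⁻¹ * u⁻¹ * (u * v) = 1 := by field_simp
    have harg : v⁻¹ * u⁻¹ / (t * v⁻¹ + (1 - t) * u⁻¹) = (t * u + (1 - t) * v)⁻¹ := by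
      rw [hden, div_div_eq_mul_div, h1, one_div]
    rw [harg] at key
    exact key
  -- change of variables
  have hderiv : ∀ u ∈ Set.Ioo α β, HasDerivWithinAt Inv.inv (-(u^2)⁻¹) (Set.Ioo α β) u :=
    fun u hu => (hasDerivAt_inv (hne u (Set.Ioo_subset_Icc_self hu))).hasDerivWithinAt
  have hinj : Set.InjOn Inv.inv (Set.Ioo α β) := inv_injective.injOn
  have himg : Inv.inv '' Set.Ioo α β = Set.Ioo a b := by
    ext x
    constructor
    · rintro ⟨u, hu, rfl⟩
      have h1 : u⁻¹ < α⁻¹ := aux_inv_lt (hsign α ⟨le_refl _, hαβ.le⟩ u (Set.Ioo_subset_Icc_self hu)) hu.1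
      have h2 : β⁻¹ < u⁻¹ := aux_inv_lt (hsign u (Set.Ioo_subset_Icc_self hu) β ⟨hαβ.le, le_refl _⟩) hu.2
      rw [hαdef, inv_inv] at h1
      rw [hβdef, inv_inv] at h2
      exact ⟨h2, h1⟩
    · intro hx
      have hx0 : x ≠ 0 := fun h => h0 (h ▸ Set.Ioo_subset_Icc_self hx)
      have hxa : 0 < a * x := by
        rcases lt_trichotomy a 0 with hA | hA | hA
        · have hbneg : b < 0 := by nlinarith
          exact mul_pos_of_neg_of_neg hA (hx.2.trans hbneg)
        · exact absurd hA ha0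
        · exact mul_pos hA (hA.trans hx.1)
      have hxb : 0 < x * b := by
        rcases lt_trichotomy a 0 with hA | hA | hA
        · have hbneg : b < 0 := by nlinarith
          exact mul_pos_of_neg_of_neg (hx.2.trans hbneg) hbneg
        · exact absurd hA ha0
        · exact mul_pos (hA.trans hx.1) ((hA.trans hx.1).trans hx.2)
      refine ⟨x⁻¹, ⟨?_, ?_⟩, inv_inv x⟩
      · exact aux_inv_lt hxb hx.2
      · exact aux_inv_lt hxa hx.1
  have hfx2i : IntervalIntegrable (fun x => f x / x ^ 2) MeasureTheory.volume a b := by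
    have hcont : ContinuousOn (fun x : ℝ => (x ^ 2)⁻¹) (Set.uIcc a b) := by
      apply ContinuousOn.inv₀
      · exact (continuous_pow 2).continuousOn
      · intro x hx
        rw [Set.uIcc_of_le hab.le] at hx
        exact pow_ne_zero 2 (fun h => h0 (h ▸ hx))
    simpa [div_eq_mul_inv] using hint.mul_continuousOn hcont
  have hEq : ∀ u ∈ Set.Ioo α β,
      |(-(u^2)⁻¹)| • ((fun x => f x / x ^ 2) u⁻¹) = f u⁻¹ := by
    intro u hu
    have hu0 := hne u (Set.Ioo_subset_Icc_self hu)
    have h2 : (0:ℝ) < u ^ 2 := by positivity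
    rw [abs_neg, abs_of_pos (inv_pos.2 h2)]
    simp only [smul_eq_mul]
    rw [inv_pow]
    rw [mul_comm, div_mul_cancel₀ _ (ne_of_gt (inv_pos.2 h2))]
  have hCOV := MeasureTheory.integral_image_eq_integral_abs_deriv_smul
    measurableSet_Ioo hderiv hinj (fun x => f x / x ^ 2)
  rw [himg] at hCOV
  have hCOV2 : ∫ x in Set.Ioo a b, f x / x ^ 2 = ∫ u in Set.Ioo α β, f u⁻¹ := by
    rw [hCOV]
    exact MeasureTheory.setIntegral_congr_fun measurableSet_Ioo (fun u hu => hEq u hu)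
  have hginti : IntegrableOn (fun u => f u⁻¹) (Set.Ioo α β) MeasureTheory.volume := by
    have h1 : IntegrableOn (fun x => f x / x ^ 2) (Set.Ioo a b) MeasureTheory.volume :=
      (intervalIntegrable_iff_integrableOn_Ioo_of_le hab.le).1 hfx2i
    rw [← himg] at h1
    have h2 := (MeasureTheory.integrableOn_image_iff_integrableOn_abs_deriv_smul
      measurableSet_Ioo hderiv hinj (fun x => f x / x ^ 2)).1 h1
    exact (MeasureTheory.integrableOn_congr_fun (fun u hu => hEq u hu) measurableSet_Ioo).1 h2
  have hgint : IntervalIntegrable (fun u => f u⁻¹) MeasureTheory.volume α β :=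
    (intervalIntegrable_iff_integrableOn_Ioo_of_le hαβ.le).2 hginti
  have hIeq : (∫ x in a..b, f x / x ^ 2) = ∫ u in α..β, f u⁻¹ := by
    rw [intervalIntegral.integral_of_le hab.le, intervalIntegral.integral_of_le hαβ.le,
      MeasureTheory.integral_Ioc_eq_integral_Ioo, MeasureTheory.integral_Ioc_eq_integral_Ioo]
    exact hCOV2
  obtain ⟨hL, hR⟩ := hh_aux hαβ hcvx hgint
  have hpos : 0 < β - α := sub_pos.2 hαβ
  have hcoef : a * b / (b - a) = (β - α)⁻¹ := by
    have h1 : β - α = (b - a) / (a * b) := by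
      rw [hβdef, hαdef]; field_simp
    rw [h1, inv_div]
  have hmid : ((α + β) / 2)⁻¹ = 2 * a * b / (a + b) := by
    have hab' : a + b ≠ 0 := by
      rcases lt_trichotomy a 0 with hA | hA | hA
      · have : b < 0 := by nlinarith
        intro h; nlinarith
      · exact absurd hA ha0
      · intro h; nlinarith [hA.trans hab]
    rw [hβdef, hαdef]
    rw [eq_div_iff hab']
    field_simp
  have hga : f α⁻¹ = f b := by simp only [hαdef, inv_inv]
  have hgb : f β⁻¹ = f a := by simp only [hβdef, inv_inv]
  rw [hIeq, hcoef]
  constructor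
  · rw [← hmid]
    rw [inv_mul_eq_div, le_div_iff₀ hpos]
    linarith [hL]
  · rw [inv_mul_eq_div, div_le_iff₀ hpos]
    rw [hga, hgb] at hR
    linarith [hR]
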